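/- Let Λ be a finite set, (ω_x)_{x∈Λ} i.i.d. positive random variables, (δ_x)_{x∈Λ} an arbitrary {0,1}^Λ-valued random vector independent of ω, θ ∈ (0,1), and h > 0. Then log E_ω[ ( E_{P_Λ}[ exp(∑_{x∈Λ}(αω_x − λ(α) + h)δ_x) ] )^θ ] ≤ |Λ| · max_{p∈[0,1]} log E[ (1 + p(e^h ξ − 1))^θ ], where ξ := e^{αω−λ(α)} and λ(α) = log E[e^{αω}]. -/

import Mathlib

open MeasureTheory

section helpers

variable {κ : Type*} [Fintype κ] [DecidableEq κ]
variable {μ : Measure ℝ} [IsProbabilityMeasure μ]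
variable {g : ℝ → ℝ} {θ : ℝ}

lemma fm_base_pos (hg : ∀ y, 0 < g y) {p : ℝ} (hp0 : 0 ≤ p) (hp1 : p ≤ 1) (y : ℝ) :
    0 < 1 + p * (g y - 1) := by
  rcases eq_or_lt_of_le hp0 with h | h
  · simp [← h]
  · nlinarith [mul_pos h (hg y)]

lemma fm_base_bound (hg : ∀ y, 0 < g y) (hθ0 : 0 < θ) (hθ1 : θ < 1)
    {p : ℝ} (hp0 : 0 ≤ p) (hp1 : p ≤ 1) (y : ℝ) :
    (1 + p * (g y - 1)) ^ θ ≤ 1 + g y := by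
  have hb := fm_base_pos hg hp0 hp1 y
  have hle : 1 + p * (g y - 1) ≤ 1 + g y := by
    rcases le_total (g y) 1 with h | h
    · nlinarith [hg y]
    · nlinarith
  calc (1 + p * (g y - 1)) ^ θ ≤ (1 + g y) ^ θ := Real.rpow_le_rpow hb.le hle hθ0.le
    _ ≤ (1 + g y) ^ (1 : ℝ) :=
        Real.rpow_le_rpow_of_exponent_le (by linarith [hg y]) hθ1.le
    _ = 1 + g y := Real.rpow_one _

lemma fm_rpow_le_one_add (hθ0 : 0 < θ) (hθ1 : θ < 1) {x : ℝ} (hx : 0 ≤ x) :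
    x ^ θ ≤ 1 + x := by
  rcases le_total x 1 with h | h
  · calc x ^ θ ≤ 1 ^ θ := Real.rpow_le_rpow hx h hθ0.le
      _ = 1 := Real.one_rpow _
      _ ≤ 1 + x := by linarith
  · calc x ^ θ ≤ x ^ (1 : ℝ) := Real.rpow_le_rpow_of_exponent_le h hθ1.le
      _ = x := Real.rpow_one _
      _ ≤ 1 + x := by linarith

lemma fm_F_integrable (hg : ∀ y, 0 < g y) (hgm : Measurable g) (hgi : Integrable g μ)
    (hθ0 : 0 < θ) (hθ1 : θ < 1) {p : ℝ} (hp0 : 0 ≤ p) (hp1 : p ≤ 1) :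
    Integrable (fun x => (1 + p * (g x - 1)) ^ θ) μ := by
  refine Integrable.mono' ((integrable_const 1).add hgi)
    ((Real.continuous_rpow_const hθ0.le).measurable.comp
      (measurable_const.add ((hgm.sub measurable_const).const_mul p))).aestronglyMeasurable ?_
  filter_upwards with x
  rw [Real.norm_of_nonneg (Real.rpow_nonneg (fm_base_pos hg hp0 hp1 x).le _)]
  exact fm_base_bound hg hθ0 hθ1 hp0 hp1 x

lemma fm_F_pos (hg : ∀ y, 0 < g y) (hgm : Measurable g) (hgi : Integrable g μ)
    (hθ0 : 0 < θ) (hθ1 : θ < 1) {p : ℝ} (hp0 : 0 ≤ p) (hp1 : p ≤ 1) :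
    0 < ∫ x, (1 + p * (g x - 1)) ^ θ ∂μ := by
  refine (integral_pos_iff_support_of_nonneg
    (fun x => Real.rpow_nonneg (fm_base_pos hg hp0 hp1 x).le _)
    (fm_F_integrable hg hgm hgi hθ0 hθ1 hp0 hp1)).2 ?_
  have hs : Function.support (fun x => (1 + p * (g x - 1)) ^ θ) = Set.univ := by
    ext x
    simp only [Function.mem_support, Set.mem_univ, iff_true]
    exact (Real.rpow_pos_of_pos (fm_base_pos hg hp0 hp1 x) θ).ne'
  rw [hs]
  simp

lemma fm_S_bdd (hg : ∀ y, 0 < g y) (hgm : Measurable g) (hgi : Integrable g μ)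
    (hθ0 : 0 < θ) (hθ1 : θ < 1) :
    BddAbove (Set.range fun p : Set.Icc (0:ℝ) 1 =>
      Real.log (∫ x, (1 + (p : ℝ) * (g x - 1)) ^ θ ∂μ)) := by
  refine ⟨Real.log (∫ x, (1 + g x) ∂μ), ?_⟩
  rintro - ⟨⟨p, hp0, hp1⟩, rfl⟩
  exact Real.log_le_log (fm_F_pos hg hgm hgi hθ0 hθ1 hp0 hp1)
    (integral_mono (fm_F_integrable hg hgm hgi hθ0 hθ1 hp0 hp1)
      ((integrable_const 1).add hgi) (fun x => fm_base_bound hg hθ0 hθ1 hp0 hp1 x))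

lemma fm_S_nonneg (hg : ∀ y, 0 < g y) (hgm : Measurable g) (hgi : Integrable g μ)
    (hθ0 : 0 < θ) (hθ1 : θ < 1) :
    0 ≤ ⨆ p : Set.Icc (0:ℝ) 1, Real.log (∫ x, (1 + (p : ℝ) * (g x - 1)) ^ θ ∂μ) := by
  have h0 := le_ciSup (fm_S_bdd hg hgm hgi hθ0 hθ1) (⟨0, by norm_num, by norm_num⟩ : Set.Icc (0:ℝ) 1)
  simpa using h0

lemma fm_one_step (hg : ∀ y, 0 < g y) (hgm : Measurable g) (hgi : Integrable g μ)
    (hθ0 : 0 < θ) (hθ1 : θ < 1) {A B : ℝ} (hB0 : 0 ≤ B) (hBA : B ≤ A) :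
    ∫ y, (A + (g y - 1) * B) ^ θ ∂μ ≤
      A ^ θ * Real.exp (⨆ p : Set.Icc (0:ℝ) 1,
        Real.log (∫ x, (1 + (p : ℝ) * (g x - 1)) ^ θ ∂μ)) := by
  rcases eq_or_lt_of_le (hB0.trans hBA) with hA | hA
  · have hB : B = 0 := le_antisymm (hBA.trans hA.symm.le) hB0
    simp [← hA, hB, Real.zero_rpow hθ0.ne']
  · set p := B / A with hp
    have hp0 : 0 ≤ p := div_nonneg hB0 hA.le
    have hp1 : p ≤ 1 := (div_le_one hA).2 hBA
    have hkey : ∀ y, (A + (g y - 1) * B) ^ θ = A ^ θ * (1 + p * (g y - 1)) ^ θ := by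
      intro y
      rw [← Real.mul_rpow hA.le (fm_base_pos hg hp0 hp1 y).le]
      congr 1
      rw [hp]
      have hAB : A * (B / A) = B := by
        rw [mul_div_assoc', mul_div_cancel_left₀ B hA.ne']
      linear_combination (1 - g y) * hAB
    simp_rw [hkey]
    rw [integral_const_mul]
    refine mul_le_mul_of_nonneg_left ?_ (Real.rpow_nonneg hA.le θ)
    rw [← Real.exp_log (fm_F_pos hg hgm hgi hθ0 hθ1 hp0 hp1)]
    exact Real.exp_le_exp.2
      (le_ciSup (fm_S_bdd hg hgm hgi hθ0 hθ1) (⟨p, hp0, hp1⟩ : Set.Icc (0:ℝ) 1))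

lemma fm_prod_integrable (hg : ∀ y, 0 < g y) (hgi : Integrable g μ) (s : Finset κ) :
    Integrable (fun ω : κ → ℝ => ∏ x : κ, (if x ∈ s then 1 + g (ω x) else 1))
      (Measure.pi fun _ : κ => μ) := by
  letI : MeasureSpace ℝ := { volume := μ }
  haveI : SigmaFinite (volume : Measure ℝ) := inferInstanceAs (SigmaFinite μ)
  exact Integrable.fintype_prod (f := fun x y => if x ∈ s then 1 + g y else 1)
    (fun i => by by_cases hi : i ∈ s <;> simp only [hi, if_true, if_false] <;>
      first
        | exact (integrable_const 1).add hgi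
        | exact integrable_const 1)

lemma fm_Z_meas (hgm : Measurable g) (w : (κ → Bool) → ℝ) (s : Finset κ) :
    Measurable (fun ω : κ → ℝ =>
      ∑ δ : κ → Bool, w δ * ∏ x ∈ s, (if δ x then g (ω x) else 1)) := by
  refine Finset.measurable_sum _ (fun δ _ => Measurable.const_mul ?_ _)
  refine Finset.measurable_prod _ (fun x _ => ?_)
  by_cases hd : δ x <;> simp only [hd, if_true, if_false]
  · exact hgm.comp (measurable_pi_apply x)
  · exact measurable_const

lemma fm_Z_nonneg (hg : ∀ y, 0 < g y) {w : (κ → Bool) → ℝ} (hw0 : ∀ δ, 0 ≤ w δ)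
    (s : Finset κ) (ω : κ → ℝ) :
    0 ≤ ∑ δ : κ → Bool, w δ * ∏ x ∈ s, (if δ x then g (ω x) else 1) :=
  Finset.sum_nonneg fun δ _ => mul_nonneg (hw0 δ) <| Finset.prod_nonneg fun x _ => by
    by_cases hd : δ x <;> simp [hd, (hg (ω x)).le]

lemma fm_Z_int (hg : ∀ y, 0 < g y) (hgm : Measurable g) (hgi : Integrable g μ)
    (hθ0 : 0 < θ) (hθ1 : θ < 1) {w : (κ → Bool) → ℝ} (hw0 : ∀ δ, 0 ≤ w δ) (s : Finset κ) :
    Integrable (fun ω : κ → ℝ =>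
      (∑ δ : κ → Bool, w δ * ∏ x ∈ s, (if δ x then g (ω x) else 1)) ^ θ)
      (Measure.pi fun _ : κ => μ) := by
  have hprod := fm_prod_integrable (μ := μ) hg hgi s
  refine Integrable.mono' ((integrable_const 1).add (hprod.const_mul (∑ δ : κ → Bool, w δ)))
    ((Real.continuous_rpow_const hθ0.le).measurable.comp
      (fm_Z_meas hgm w s)).aestronglyMeasurable ?_
  filter_upwards with ω
  have hZ0 := fm_Z_nonneg hg hw0 s ω
  rw [Real.norm_of_nonneg (Real.rpow_nonneg hZ0 _)]
  have hP0 : (0:ℝ) ≤ ∏ x : κ, (if x ∈ s then 1 + g (ω x) else 1) :=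
    Finset.prod_nonneg fun x _ => by
      by_cases hx : x ∈ s <;> simp [hx] <;> linarith [hg (ω x)]
  have hZle : (∑ δ : κ → Bool, w δ * ∏ x ∈ s, (if δ x then g (ω x) else 1)) ≤
      (∑ δ : κ → Bool, w δ) * ∏ x : κ, (if x ∈ s then 1 + g (ω x) else 1) := by
    have h1 : ∀ δ : κ → Bool, (∏ x ∈ s, (if δ x then g (ω x) else 1)) ≤
        ∏ x : κ, (if x ∈ s then 1 + g (ω x) else 1) := by
      intro δ
      have he : ∏ x : κ, (if x ∈ s then 1 + g (ω x) else 1) = ∏ x ∈ s, (1 + g (ω x)) := by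
        rw [Finset.prod_ite_mem Finset.univ s (fun x => 1 + g (ω x)), Finset.univ_inter]
      rw [he]
      refine Finset.prod_le_prod (fun x _ => ?_) (fun x _ => ?_)
      · by_cases hd : δ x <;> simp [hd, (hg (ω x)).le]
      · by_cases hd : δ x <;> simp [hd] <;> linarith [hg (ω x)]
    calc (∑ δ : κ → Bool, w δ * ∏ x ∈ s, (if δ x then g (ω x) else 1))
        ≤ ∑ δ : κ → Bool, w δ * ∏ x : κ, (if x ∈ s then 1 + g (ω x) else 1) :=
          Finset.sum_le_sum fun δ _ => mul_le_mul_of_nonneg_left (h1 δ) (hw0 δ)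
      _ = (∑ δ : κ → Bool, w δ) * ∏ x : κ, (if x ∈ s then 1 + g (ω x) else 1) := by
          rw [← Finset.sum_mul]
  calc (∑ δ : κ → Bool, w δ * ∏ x ∈ s, (if δ x then g (ω x) else 1)) ^ θ
      ≤ ((∑ δ : κ → Bool, w δ) * ∏ x : κ, (if x ∈ s then 1 + g (ω x) else 1)) ^ θ :=
        Real.rpow_le_rpow hZ0 hZle hθ0.le
    _ ≤ 1 + (∑ δ : κ → Bool, w δ) * ∏ x : κ, (if x ∈ s then 1 + g (ω x) else 1) :=
        fm_rpow_le_one_add hθ0 hθ1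
          (mul_nonneg (Finset.sum_nonneg fun δ _ => hw0 δ) hP0)

end helpers

section key

variable {κ : Type*} [Fintype κ] [DecidableEq κ]

lemma fm_key (μ : Measure ℝ) [IsProbabilityMeasure μ]
    {g : ℝ → ℝ} (hg : ∀ y, 0 < g y) (hgm : Measurable g) (hgi : Integrable g μ)
    {θ : ℝ} (hθ0 : 0 < θ) (hθ1 : θ < 1)
    (w : (κ → Bool) → ℝ) (hw0 : ∀ δ, 0 ≤ w δ) (hw1 : ∑ δ : κ → Bool, w δ = 1)
    (s : Finset κ) :
    ∫ ω, (∑ δ : κ → Bool, w δ * ∏ x ∈ s, (if δ x then g (ω x) else 1)) ^ θ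
        ∂(Measure.pi fun _ : κ => μ) ≤
      Real.exp ((s.card : ℝ) * ⨆ p : Set.Icc (0:ℝ) 1,
        Real.log (∫ x, (1 + (p : ℝ) * (g x - 1)) ^ θ ∂μ)) := by
  set S := ⨆ p : Set.Icc (0:ℝ) 1, Real.log (∫ x, (1 + (p : ℝ) * (g x - 1)) ^ θ ∂μ) with hSdef
  induction s using Finset.induction_on with
  | empty => simp [hw1]
  | @insert a t ha ih =>
    letI : Unique {x : κ // x = a} := ⟨⟨⟨a, rfl⟩⟩, fun b => Subtype.ext b.2⟩
    set π := Measure.pi (fun _ : κ => μ) with hπ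
    set π₁ := @Measure.pi {x : κ // x = a} (fun _ => ℝ) (Subtype.fintype _)
      (fun _ => inferInstance) (fun _ => μ) with hπ₁
    set π₂ := Measure.pi (fun _ : {x : κ // ¬ x = a} => μ) with hπ₂
    set e := MeasurableEquiv.piEquivPiSubtypeProd (fun _ : κ => ℝ) (fun x => x = a) with he
    have mp : MeasurePreserving (⇑e) π (π₁.prod π₂) := by
      unfold π π₁ π₂ e
      exact measurePreserving_piEquivPiSubtypeProd (fun _ : κ => μ) (fun x => x = a)
    set A : (κ → ℝ) → ℝ :=
      fun ω => ∑ δ : κ → Bool, w δ * ∏ x ∈ t, (if δ x then g (ω x) else 1) with hA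
    set B : (κ → ℝ) → ℝ :=
      fun ω => ∑ δ : κ → Bool, (if δ a then w δ else 0) *
        ∏ x ∈ t, (if δ x then g (ω x) else 1) with hB
    have hZ : ∀ ω : κ → ℝ,
        (∑ δ : κ → Bool, w δ * ∏ x ∈ insert a t, (if δ x then g (ω x) else 1))
          = A ω + (g (ω a) - 1) * B ω := by
      intro ω
      rw [hA, hB, Finset.mul_sum, ← Finset.sum_add_distrib]
      refine Finset.sum_congr rfl fun δ _ => ?_
      rw [Finset.prod_insert ha]
      by_cases hd : δ a = true
      · rw [if_pos hd, if_pos hd]; ring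
      · rw [if_neg hd, if_neg hd]; ring
    -- congruence: A and B only depend on coordinates in t
    have hcongr : ∀ (v : (κ → Bool) → ℝ) (ω₁ ω₂ : κ → ℝ), (∀ x ∈ t, ω₁ x = ω₂ x) →
        (∑ δ : κ → Bool, v δ * ∏ x ∈ t, (if δ x then g (ω₁ x) else 1))
          = ∑ δ : κ → Bool, v δ * ∏ x ∈ t, (if δ x then g (ω₂ x) else 1) := by
      intro v ω₁ ω₂ hω
      refine Finset.sum_congr rfl fun δ _ => ?_
      congr 1
      exact Finset.prod_congr rfl fun x hx => by rw [hω x hx]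
    set r : ({x : κ // ¬ x = a} → ℝ) → (κ → ℝ) :=
      fun ω' x => if hx : x = a then 0 else ω' ⟨x, hx⟩ with hr
    have hre : ∀ (ω : κ → ℝ) x, x ∈ t → r ((e ω).2) x = ω x := by
      intro ω x hx
      have hxa : ¬ x = a := fun hcon => ha (hcon ▸ hx)
      simp only [hr, dif_neg hxa]
      rfl
    have hAe : ∀ ω : κ → ℝ, A (r ((e ω).2)) = A ω := fun ω =>
      hcongr w _ _ (fun x hx => hre ω x hx)
    have hBe : ∀ ω : κ → ℝ, B (r ((e ω).2)) = B ω := fun ω =>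
      hcongr _ _ _ (fun x hx => hre ω x hx)
    set G : ({x : κ // x = a} → ℝ) × ({x : κ // ¬ x = a} → ℝ) → ℝ :=
      fun z => (A (r z.2) + (g (z.1 ⟨a, rfl⟩) - 1) * B (r z.2)) ^ θ with hG
    have hGe : ∀ ω : κ → ℝ, G (e ω) =
        (∑ δ : κ → Bool, w δ * ∏ x ∈ insert a t, (if δ x then g (ω x) else 1)) ^ θ := by
      intro ω
      rw [hZ ω]
      simp only [hG]
      rw [hAe ω, hBe ω]
      rfl
    have hGint : Integrable G (π₁.prod π₂) := by
      rw [← mp.integrable_comp_emb e.measurableEmbedding]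
      have : G ∘ e = fun ω =>
          (∑ δ : κ → Bool, w δ * ∏ x ∈ insert a t, (if δ x then g (ω x) else 1)) ^ θ :=
        funext hGe
      rw [this]
      exact fm_Z_int hg hgm hgi hθ0 hθ1 hw0 (insert a t)
    have hA_int : Integrable (fun ω => (A ω) ^ θ) π :=
      fm_Z_int hg hgm hgi hθ0 hθ1 hw0 t
    have h2 : Integrable (fun z : ({x : κ // x = a} → ℝ) × ({x : κ // ¬ x = a} → ℝ) =>
        (A (r z.2)) ^ θ) (π₁.prod π₂) := by
      rw [← mp.integrable_comp_emb e.measurableEmbedding]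
      have : (fun z : ({x : κ // x = a} → ℝ) × ({x : κ // ¬ x = a} → ℝ) =>
          (A (r z.2)) ^ θ) ∘ e = fun ω => (A ω) ^ θ :=
        funext fun ω => by simp only [Function.comp_apply, hAe ω]
      rw [this]
      exact hA_int
    have hAr_int : Integrable (fun ω' : {x : κ // ¬ x = a} → ℝ => (A (r ω')) ^ θ) π₂ := by
      refine (h2.integral_prod_right).congr (Filter.Eventually.of_forall fun ω' => ?_)
      simp
    have hB0 : ∀ ω' : {x : κ // ¬ x = a} → ℝ, 0 ≤ B (r ω') := by
      intro ω'
      refine Finset.sum_nonneg fun δ _ => mul_nonneg ?_ ?_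
      · by_cases hd : δ a <;> simp [hd, hw0 δ]
      · exact Finset.prod_nonneg fun x _ => by
          by_cases hd : δ x <;> simp [hd, (hg _).le]
    have hBA : ∀ ω' : {x : κ // ¬ x = a} → ℝ, B (r ω') ≤ A (r ω') := by
      intro ω'
      refine Finset.sum_le_sum fun δ _ => mul_le_mul_of_nonneg_right ?_ ?_
      · by_cases hd : δ a <;> simp [hd, hw0 δ]
      · exact Finset.prod_nonneg fun x _ => by
          by_cases hd : δ x <;> simp [hd, (hg _).le]
    have hcard : ((insert a t).card : ℝ) = (t.card : ℝ) + 1 := by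
      rw [Finset.card_insert_of_notMem ha]
      push_cast
      ring
    calc ∫ ω, (∑ δ : κ → Bool, w δ * ∏ x ∈ insert a t, (if δ x then g (ω x) else 1)) ^ θ ∂π
        = ∫ ω, G (e ω) ∂π := by
          refine integral_congr_ae (Filter.Eventually.of_forall fun ω => ?_)
          exact (hGe ω).symm
      _ = ∫ z, G z ∂(π₁.prod π₂) := mp.integral_comp e.measurableEmbedding G
      _ = ∫ ω', ∫ v, G (v, ω') ∂π₁ ∂π₂ := integral_prod_symm G hGint
      _ ≤ ∫ ω', (A (r ω')) ^ θ * Real.exp S ∂π₂ := by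
          refine integral_mono hGint.integral_prod_right (hAr_int.mul_const _) fun ω' => ?_
          have hfu : MeasurePreserving
              (⇑(MeasurableEquiv.funUnique {x : κ // x = a} ℝ)) π₁ μ := by
            convert measurePreserving_funUnique μ {x : κ // x = a} using 2
          have heq : ∫ v, G (v, ω') ∂π₁ =
              ∫ y, (A (r ω') + (g y - 1) * B (r ω')) ^ θ ∂μ := by
            have h1 := hfu.integral_comp
              (MeasurableEquiv.funUnique {x : κ // x = a} ℝ).measurableEmbedding
              (fun y => (A (r ω') + (g y - 1) * B (r ω')) ^ θ)
            rw [← h1]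
            rfl
          rw [heq]
          exact fm_one_step hg hgm hgi hθ0 hθ1 (hB0 ω') (hBA ω')
      _ = Real.exp S * ∫ ω', (A (r ω')) ^ θ ∂π₂ := by
          rw [integral_mul_const, mul_comm]
      _ = Real.exp S * ∫ ω, (A ω) ^ θ ∂π := by
          congr 1
          calc ∫ ω', (A (r ω')) ^ θ ∂π₂
              = ∫ ω', ∫ _v, (A (r ω')) ^ θ ∂π₁ ∂π₂ := by
                refine integral_congr_ae (Filter.Eventually.of_forall fun ω' => ?_)
                simp
            _ = ∫ z, (A (r z.2)) ^ θ ∂(π₁.prod π₂) := (integral_prod_symm _ h2).symm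
            _ = ∫ ω, (A ω) ^ θ ∂π := by
                rw [← mp.integral_comp e.measurableEmbedding
                  (fun z : ({x : κ // x = a} → ℝ) × ({x : κ // ¬ x = a} → ℝ) =>
                    (A (r z.2)) ^ θ)]
                exact integral_congr_ae (Filter.Eventually.of_forall fun ω => by
                  simp only [hAe ω])
      _ ≤ Real.exp S * Real.exp ((t.card : ℝ) * S) :=
          mul_le_mul_of_nonneg_left ih (Real.exp_nonneg _)
      _ = Real.exp (((insert a t).card : ℝ) * S) := by
          rw [← Real.exp_add, hcard]
          ring_nf

end key

/-- Fractional moment version of the annealed-type upper bound. -/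
theorem fractional_moment_log_partition_le_bernoulli_sup
    {ι : Type*} (Λ : Finset ι)
    (μ : Measure ℝ) [IsProbabilityMeasure μ]
    (hposω : ∀ᵐ x ∂μ, 0 < x)
    (P : Measure (Λ → Bool)) [IsProbabilityMeasure P]
    (α h θ : ℝ) (hh : 0 < h) (hθ0 : 0 < θ) (hθ1 : θ < 1)
    (hexp : Integrable (fun x => Real.exp (α * x)) μ)
    (lam : ℝ) (hlam : lam = Real.log (∫ x, Real.exp (α * x) ∂μ)) :
    Real.log (∫ ω, (∫ δ, Real.exp (∑ x : Λ,
          (α * ω x - lam + h) * (if δ x then 1 else 0)) ∂P) ^ θ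
        ∂(Measure.pi fun _ : Λ => μ)) ≤
      (Λ.card : ℝ) *
        ⨆ p : Set.Icc (0:ℝ) 1,
          Real.log (∫ x,
            (1 + (p : ℝ) * (Real.exp h * Real.exp (α * x - lam) - 1)) ^ θ ∂μ) := by
  classical
  set g : ℝ → ℝ := fun y => Real.exp h * Real.exp (α * y - lam) with hgdef
  have hg : ∀ y, 0 < g y := fun y => mul_pos (Real.exp_pos h) (Real.exp_pos _)
  have hgm : Measurable g :=
    (Real.measurable_exp.comp ((measurable_id'.const_mul α).sub measurable_const)).const_mul _
  have hgi : Integrable g μ := by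
    have hge : g = fun y => (Real.exp h * Real.exp (-lam)) * Real.exp (α * y) := by
      funext y
      rw [hgdef]
      simp only []
      rw [sub_eq_add_neg, Real.exp_add]
      ring
    rw [hge]
    exact hexp.const_mul _
  set w : (↥Λ → Bool) → ℝ := fun δ => (P {δ}).toReal with hw
  have hw0 : ∀ δ, 0 ≤ w δ := fun δ => ENNReal.toReal_nonneg
  have hw1 : ∑ δ : ↥Λ → Bool, w δ = 1 := by
    have h1 : (∫ _ : ↥Λ → Bool, (1:ℝ) ∂P) = 1 := by simp
    rw [integral_fintype (integrable_const 1)] at h1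
    simp only [smul_eq_mul, mul_one] at h1
    exact h1
  have hconv : ∀ ω : ↥Λ → ℝ,
      (∫ δ, Real.exp (∑ x : Λ, (α * ω x - lam + h) * (if δ x then 1 else 0)) ∂P)
        = ∑ δ : ↥Λ → Bool, w δ * ∏ x ∈ Finset.univ, (if δ x then g (ω x) else 1) := by
    intro ω
    have hIf : Integrable (fun δ : ↥Λ → Bool =>
        Real.exp (∑ x : ↥Λ, (α * ω x - lam + h) * (if δ x then 1 else 0))) P :=
      Integrable.of_finite
    rw [integral_fintype hIf]
    refine Finset.sum_congr rfl fun δ _ => ?_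
    rw [smul_eq_mul]
    congr 1
    rw [Real.exp_sum]
    refine Finset.prod_congr rfl fun x _ => ?_
    by_cases hd : δ x
    · simp only [hd, if_true, mul_one, hgdef]
      rw [← Real.exp_add]
      congr 1
      ring
    · simp [hd]
  have hkey := fm_key μ hg hgm hgi hθ0 hθ1 w hw0 hw1 (Finset.univ : Finset ↥Λ)
  rw [Finset.card_univ, Fintype.card_coe] at hkey
  simp_rw [hconv]
  set S := ⨆ p : Set.Icc (0:ℝ) 1, Real.log (∫ x, (1 + (p : ℝ) * (g x - 1)) ^ θ ∂μ) with hSdef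
  have hS0 : 0 ≤ S := fm_S_nonneg hg hgm hgi hθ0 hθ1
  have hInonneg : 0 ≤ ∫ ω, (∑ δ : ↥Λ → Bool, w δ *
      ∏ x ∈ Finset.univ, (if δ x then g (ω x) else 1)) ^ θ ∂(Measure.pi fun _ : ↥Λ => μ) :=
    integral_nonneg fun ω => Real.rpow_nonneg (fm_Z_nonneg hg hw0 _ ω) _
  rcases eq_or_lt_of_le hInonneg with hI | hI
  · rw [← hI, Real.log_zero]
    exact mul_nonneg (Nat.cast_nonneg _) hS0
  · calc Real.log _ ≤ Real.log (Real.exp ((Λ.card : ℝ) * S)) := Real.log_le_log hI hkey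
      _ = (Λ.card : ℝ) * S := Real.log_exp _
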